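/- arXiv:1405.4897 — 6 statements merged into one kernel-verified Lean document; each statement's English description precedes it below -/
import Mathlib

section
/- Let R = S(q, r) ∩ {θ : n^T θ ≤ c} be nonempty, where S(q, r) is a closed Euclidean ball and n is a unit vector. If q ∉ R (equivalently n^T q > c), then the diameter of R equals 2√(r² − (n^T q − c)²); otherwise the diameter of R equals 2r. -/
private lemma stmt7_aux (r d a b A B C : ℝ) (hd0 : 0 < d) (hdr : d ≤ r)
    (ha : a ≤ -d) (hb : b ≤ -d) (hA : A ^ 2 ≤ r ^ 2 - a ^ 2) (hB : B ^ 2 ≤ r ^ 2 - b ^ 2)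
    (hC : C ^ 2 ≤ (A + B) ^ 2) : (a - b) ^ 2 + C ^ 2 ≤ 4 * (r ^ 2 - d ^ 2) := by
  have h2 : (0:ℝ) ≤ -(a + b) - 2 * d := by linarith
  nlinarith [sq_nonneg (A - B), sq_nonneg (a + b + 2 * d), mul_nonneg hd0.le h2]

set_option maxHeartbeats 1000000 in
theorem stmt7 (n : ℕ) (hn : 2 ≤ n) (q nv : EuclideanSpace ℝ (Fin n)) (r c : ℝ)
    (hr : 0 < r) (hnv : ‖nv‖ = 1)
    (hne : (Metric.closedBall q r ∩ {θ | (inner ℝ nv θ : ℝ) ≤ c}).Nonempty) :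
    (c < (inner ℝ nv q : ℝ) →
      Metric.diam (Metric.closedBall q r ∩ {θ | (inner ℝ nv θ : ℝ) ≤ c}) =
        2 * Real.sqrt (r ^ 2 - ((inner ℝ nv q : ℝ) - c) ^ 2)) ∧
    ((inner ℝ nv q : ℝ) ≤ c →
      Metric.diam (Metric.closedBall q r ∩ {θ | (inner ℝ nv θ : ℝ) ≤ c}) = 2 * r) := by
  have hnv0 : nv ≠ 0 := by
    intro h; rw [h, norm_zero] at hnv; norm_num at hnv
  have hnvs : (inner ℝ nv nv : ℝ) = 1 := by
    rw [real_inner_self_eq_norm_sq, hnv]; norm_num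
  -- a unit vector orthogonal to nv
  obtain ⟨u, hu1, hu2⟩ : ∃ u : EuclideanSpace ℝ (Fin n), ‖u‖ = 1 ∧ (inner ℝ nv u : ℝ) = 0 := by
    have h1 : Module.finrank ℝ (ℝ ∙ nv) = 1 := finrank_span_singleton hnv0
    have h2 := Submodule.finrank_add_finrank_orthogonal (K := (ℝ ∙ nv))
    rw [h1, finrank_euclideanSpace_fin] at h2
    have hbot : (ℝ ∙ nv)ᗮ ≠ ⊥ := by
      intro h
      rw [h, finrank_bot] at h2
      omega
    obtain ⟨v, hv, hv0⟩ := (Submodule.ne_bot_iff _).mp hbot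
    have hvn : ‖v‖ ≠ 0 := norm_ne_zero_iff.mpr hv0
    refine ⟨‖v‖⁻¹ • v, ?_, ?_⟩
    · rw [norm_smul, norm_inv, norm_norm]; field_simp
    · rw [real_inner_smul_right,
        (Submodule.mem_orthogonal _ v).mp hv nv (Submodule.mem_span_singleton_self nv)]
      ring
  have hbd : Bornology.IsBounded (Metric.closedBall q r ∩ {θ | (inner ℝ nv θ : ℝ) ≤ c}) :=
    (Metric.isBounded_closedBall).subset Set.inter_subset_left
  constructor
  · -- case c < ⟪nv, q⟫
    intro hc
    set d : ℝ := (inner ℝ nv q : ℝ) - c with hd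
    have hd0 : 0 < d := sub_pos.mpr hc
    have hdr : d ≤ r := by
      obtain ⟨θ, hθb, hθc⟩ := hne
      have h1 : (inner ℝ nv (q - θ) : ℝ) ≤ ‖nv‖ * ‖q - θ‖ := real_inner_le_norm nv (q - θ)
      rw [inner_sub_right, hnv, one_mul] at h1
      have h2 : ‖q - θ‖ ≤ r := by
        rw [← dist_eq_norm]; rw [Metric.mem_closedBall, dist_comm] at hθb; exact hθb
      have hθc' : (inner ℝ nv θ : ℝ) ≤ c := hθc
      rw [hd]; linarith
    have hrd : (0:ℝ) ≤ r ^ 2 - d ^ 2 := by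
      have := pow_le_pow_left₀ hd0.le hdr 2
      linarith
    set s : ℝ := Real.sqrt (r ^ 2 - d ^ 2) with hs
    have hs0 : 0 ≤ s := Real.sqrt_nonneg _
    have hs2 : s ^ 2 = r ^ 2 - d ^ 2 := Real.sq_sqrt hrd
    apply le_antisymm
    · -- diameter upper bound
      apply Metric.diam_le_of_forall_dist_le (by positivity)
      rintro x ⟨hxb, hxc⟩ y ⟨hyb, hyc⟩
      have hxcc : (inner ℝ nv x : ℝ) ≤ c := hxc
      have hycc : (inner ℝ nv y : ℝ) ≤ c := hyc
      set a : ℝ := (inner ℝ nv (x - q) : ℝ) with ha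
      set b : ℝ := (inner ℝ nv (y - q) : ℝ) with hb
      set x' : EuclideanSpace ℝ (Fin n) := x - q - a • nv with hx'
      set y' : EuclideanSpace ℝ (Fin n) := y - q - b • nv with hy'
      have ha' : a = (inner ℝ nv x : ℝ) - (inner ℝ nv q : ℝ) := by rw [ha, inner_sub_right]
      have hb' : b = (inner ℝ nv y : ℝ) - (inner ℝ nv q : ℝ) := by rw [hb, inner_sub_right]
      have hax : a ≤ -d := by rw [ha', hd]; linarith
      have hby : b ≤ -d := by rw [hb', hd]; linarith
      have hx'o : (inner ℝ nv x' : ℝ) = 0 := by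
        rw [hx', inner_sub_right, inner_sub_right, real_inner_smul_right, hnvs, ha']
        ring
      have hy'o : (inner ℝ nv y' : ℝ) = 0 := by
        rw [hy', inner_sub_right, inner_sub_right, real_inner_smul_right, hnvs, hb']
        ring
      have hxdec : x - q = a • nv + x' := by rw [hx']; abel
      have hydec : y - q = b • nv + y' := by rw [hy']; abel
      have hxn : ‖x - q‖ ^ 2 = a ^ 2 + ‖x'‖ ^ 2 := by
        rw [hxdec, norm_add_sq_real, real_inner_smul_left, hx'o, norm_smul, hnv]
        simp [Real.norm_eq_abs, sq_abs]
      have hyn : ‖y - q‖ ^ 2 = b ^ 2 + ‖y'‖ ^ 2 := by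
        rw [hydec, norm_add_sq_real, real_inner_smul_left, hy'o, norm_smul, hnv]
        simp [Real.norm_eq_abs, sq_abs]
      have hxr : ‖x - q‖ ≤ r := by
        rw [← dist_eq_norm]; exact Metric.mem_closedBall.mp hxb
      have hyr : ‖y - q‖ ≤ r := by
        rw [← dist_eq_norm]; exact Metric.mem_closedBall.mp hyb
      have hA : ‖x'‖ ^ 2 ≤ r ^ 2 - a ^ 2 := by
        have := pow_le_pow_left₀ (norm_nonneg (x - q)) hxr 2
        linarith
      have hB : ‖y'‖ ^ 2 ≤ r ^ 2 - b ^ 2 := by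
        have := pow_le_pow_left₀ (norm_nonneg (y - q)) hyr 2
        linarith
      have hxy : x - y = (a - b) • nv + (x' - y') := by
        rw [sub_smul, hx', hy']; abel
      have hxyn : ‖x - y‖ ^ 2 = (a - b) ^ 2 + ‖x' - y'‖ ^ 2 := by
        rw [hxy, norm_add_sq_real, real_inner_smul_left, inner_sub_right, hx'o, hy'o,
          norm_smul, hnv]
        simp [Real.norm_eq_abs, sq_abs]
      have hsub : ‖x' - y'‖ ≤ ‖x'‖ + ‖y'‖ := norm_sub_le _ _
      have key : ‖x - y‖ ^ 2 ≤ (2 * s) ^ 2 := by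
        rw [hxyn]
        have h1 : ‖x' - y'‖ ^ 2 ≤ (‖x'‖ + ‖y'‖) ^ 2 :=
          pow_le_pow_left₀ (norm_nonneg _) hsub 2
        have h4 : (2 * s) ^ 2 = 4 * (r ^ 2 - d ^ 2) := by rw [mul_pow, hs2]; ring
        rw [h4]
        exact stmt7_aux r d a b ‖x'‖ ‖y'‖ ‖x' - y'‖ hd0 hdr hax hby hA hB h1
      calc dist x y = ‖x - y‖ := dist_eq_norm x y
        _ = Real.sqrt (‖x - y‖ ^ 2) := (Real.sqrt_sq (norm_nonneg _)).symm
        _ ≤ Real.sqrt ((2 * s) ^ 2) := Real.sqrt_le_sqrt key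
        _ = 2 * s := Real.sqrt_sq (by positivity)
    · -- diameter lower bound: two extreme points
      set p : EuclideanSpace ℝ (Fin n) := q - d • nv with hp
      have hmem : ∀ t : ℝ, t = s ∨ t = -s → p + t • u ∈
          Metric.closedBall q r ∩ {θ | (inner ℝ nv θ : ℝ) ≤ c} := by
        intro t ht
        have ht2 : t ^ 2 = s ^ 2 := by rcases ht with h | h <;> rw [h] <;> ring
        constructor
        · rw [Metric.mem_closedBall, dist_eq_norm]
          have he : p + t • u - q = t • u - d • nv := by rw [hp]; abel
          have hn2 : ‖p + t • u - q‖ ^ 2 = r ^ 2 := by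
            have hu2' : (inner ℝ u nv : ℝ) = 0 := by rw [real_inner_comm]; exact hu2
            rw [he, norm_sub_sq_real, real_inner_smul_left, real_inner_smul_right,
              hu2', norm_smul, norm_smul, hnv, hu1]
            simp only [Real.norm_eq_abs, mul_one, mul_zero, sq_abs]
            rw [ht2, hs2]; ring
          have : ‖p + t • u - q‖ = r := by
            have h3 := Real.sqrt_sq (norm_nonneg (p + t • u - q))
            rw [hn2] at h3
            rw [← h3, Real.sqrt_sq hr.le]
          linarith
        · show (inner ℝ nv (p + t • u) : ℝ) ≤ c
          rw [hp, inner_add_right, inner_sub_right, real_inner_smul_right,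
            real_inner_smul_right, hnvs, hu2, hd]
          ring_nf
          linarith
      have h1 := hmem s (Or.inl rfl)
      have h2 := hmem (-s) (Or.inr rfl)
      have hdist : dist (p + s • u) (p + (-s) • u) = 2 * s := by
        rw [dist_eq_norm]
        have he : p + s • u - (p + (-s) • u) = (2 * s) • u := by
          rw [two_mul, add_smul, neg_smul]; abel
        rw [he, norm_smul, hu1, mul_one, Real.norm_eq_abs, abs_of_nonneg (by positivity)]
      calc 2 * s = dist (p + s • u) (p + (-s) • u) := hdist.symm
        _ ≤ _ := Metric.dist_le_diam_of_mem hbd h1 h2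
  · -- case ⟪nv, q⟫ ≤ c
    intro hc
    apply le_antisymm
    · apply Metric.diam_le_of_forall_dist_le (by positivity)
      rintro x ⟨hxb, -⟩ y ⟨hyb, -⟩
      calc dist x y ≤ dist x q + dist q y := dist_triangle _ _ _
        _ ≤ r + r := by
            rw [Metric.mem_closedBall] at hxb hyb
            rw [dist_comm q y]; linarith
        _ = 2 * r := by ring
    · have hmem : ∀ t : ℝ, t = r ∨ t = -r → q + t • u ∈
          Metric.closedBall q r ∩ {θ | (inner ℝ nv θ : ℝ) ≤ c} := by
        intro t ht
        have hta : |t| = r := by rcases ht with h | h <;> rw [h] <;> simp [abs_of_nonneg hr.le]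
        constructor
        · rw [Metric.mem_closedBall, dist_eq_norm]
          have he : q + t • u - q = t • u := by abel
          rw [he, norm_smul, hu1, mul_one, Real.norm_eq_abs, hta]
        · show (inner ℝ nv (q + t • u) : ℝ) ≤ c
          rw [inner_add_right, real_inner_smul_right, hu2]
          simpa using hc
      have h1 := hmem r (Or.inl rfl)
      have h2 := hmem (-r) (Or.inr rfl)
      have hdist : dist (q + r • u) (q + (-r) • u) = 2 * r := by
        rw [dist_eq_norm]
        have he : q + r • u - (q + (-r) • u) = (2 * r) • u := by
          rw [two_mul, add_smul, neg_smul]; abel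
        rw [he, norm_smul, hu1, mul_one, Real.norm_eq_abs, abs_of_nonneg (by positivity)]
      calc 2 * r = dist (q + r • u) (q + (-r) • u) := hdist.symm
        _ ≤ _ := Metric.dist_le_diam_of_mem hbd h1 h2
end

section
/- Fix a dome D = S(q, r) ∩ {θ : n^T θ ≤ c} with r > 0, unit normal n, and ψ = (n^T q − c)/r satisfying |ψ| ≤ 1. Then for any b ∈ R^n, max_{θ ∈ D} θ^T b = q^T b + M(n^T b, ‖b‖₂), where M(t₁, t₂) = r t₂ if t₁ < −ψ t₂, and M(t₁, t₂) = −ψ r t₁ + r √(t₂² − t₁²) √(1 − ψ²) if t₁ ≥ −ψ t₂. -/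
set_option maxHeartbeats 1000000

theorem lemA (t₁ t₂ A ψ κ : ℝ) (ht₂ : 0 ≤ t₂) (hA : 0 ≤ A) (hA2 : A^2 = t₂^2 - t₁^2)
    (hκ : 0 ≤ κ) (hκ2 : κ^2 = 1 - ψ^2) (hc : -ψ*t₂ ≤ t₁) : 0 ≤ κ*t₁ + ψ*A := by
  rcases le_or_gt 0 t₁ with h1 | h1
  · rcases le_or_gt 0 ψ with h2 | h2
    · positivity
    · have hx : 0 ≤ κ * t₁ := mul_nonneg hκ h1
      have hy : 0 ≤ -ψ * A := mul_nonneg (by linarith) hA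
      have hsq : (-ψ*A)^2 ≤ (κ*t₁)^2 := by
        nlinarith [mul_le_mul hc hc (mul_nonneg (by linarith : (0:ℝ) ≤ -ψ) ht₂) h1]
      nlinarith [mul_nonneg hx hy]
  · have hψpos : 0 < ψ := by nlinarith
    have hx : 0 ≤ ψ * A := mul_nonneg hψpos.le hA
    have hy : 0 ≤ κ * -t₁ := mul_nonneg hκ (by linarith)
    have hc' : -t₁ ≤ ψ * t₂ := by linarith
    have hsq : (κ*(-t₁))^2 ≤ (ψ*A)^2 := by
      nlinarith [mul_le_mul hc' hc' (by linarith : (0:ℝ) ≤ -t₁) (mul_nonneg hψpos.le ht₂)]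
    nlinarith [mul_nonneg hx hy]

theorem ubound (n : ℕ) (nv b z : EuclideanSpace ℝ (Fin n)) (r ψ κ A t₁ t₂ s : ℝ)
    (hr : 0 < r) (hψup : ψ ≤ 1)
    (hnn : (inner ℝ nv nv : ℝ) = 1) (hnv : ‖nv‖ = 1)
    (ht₁ : (inner ℝ nv b : ℝ) = t₁) (ht₂ : ‖b‖ = t₂) (hsd : (inner ℝ nv z : ℝ) = s)
    (hκ0 : 0 ≤ κ) (hκ2 : κ^2 = 1 - ψ^2) (hA0 : 0 ≤ A) (hA2 : A^2 = t₂^2 - t₁^2)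
    (ht12 : |t₁| ≤ t₂) (hz : ‖z‖ ≤ r) (hs : s ≤ -(ψ*r)) (hcase : -ψ*t₂ ≤ t₁) :
    (inner ℝ z b : ℝ) ≤ -ψ*r*t₁ + r*A*κ := by
  have ht₂0 : 0 ≤ t₂ := ht₂ ▸ norm_nonneg b
  have hψsq : ψ^2 ≤ 1 := by nlinarith [hκ2, sq_nonneg κ]
  have ht12' : t₁^2 ≤ t₂^2 := by nlinarith [sq_abs t₁, abs_nonneg t₁]
  have hsabs : |s| ≤ r := by
    have h1 : |(inner ℝ nv z : ℝ)| ≤ ‖nv‖ * ‖z‖ := abs_real_inner_le_norm nv z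
    rw [hnv, one_mul, hsd] at h1
    linarith
  have hzn : (inner ℝ z nv : ℝ) = s := by rw [real_inner_comm]; exact hsd
  have hbn : (inner ℝ b nv : ℝ) = t₁ := by rw [real_inner_comm]; exact ht₁
  rcases eq_or_lt_of_le hA0 with hA00 | hApos
  · -- A = 0
    have hbt : b = t₁ • nv := by
      have h0 : ‖b - t₁ • nv‖^2 = 0 := by
        rw [norm_sub_sq_real, real_inner_smul_right, hbn, norm_smul, Real.norm_eq_abs, hnv, ht₂]
        nlinarith [sq_abs t₁]
      have h1 : ‖b - t₁ • nv‖ = 0 := by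
        nlinarith [norm_nonneg (b - t₁ • nv)]
      rw [← sub_eq_zero]
      exact norm_eq_zero.1 h1
    have hzb : (inner ℝ z b : ℝ) = t₁ * s := by
      rw [hbt, real_inner_smul_right, hzn]
    rw [hzb, ← hA00]
    rcases le_or_gt 0 t₁ with h1 | h1
    · nlinarith [mul_le_mul_of_nonneg_left hs h1]
    · have ht2eq : t₂ = -t₁ := by
        have hx1 : -t₁ ≤ t₂ := by nlinarith [neg_abs_le t₁]
        have hx2 : t₂ ≤ -t₁ := by nlinarith
        linarith
      have hψeq : ψ = 1 := by
        have : 1 ≤ ψ := by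
          rw [ht2eq] at hcase
          nlinarith
        linarith
      have hsr : s = -r := by
        have : -r ≤ s := by linarith [abs_le.1 hsabs |>.1]
        rw [hψeq] at hs
        linarith
      rw [hsr, hψeq]
      nlinarith []
  · rcases eq_or_lt_of_le hκ0 with hκ00 | hκpos
    · -- κ = 0 : ψ = ±1
      have hψ2 : (ψ - 1) * (ψ + 1) = 0 := by nlinarith [hκ2, hκ00]
      rcases mul_eq_zero.1 hψ2 with h | h
      · -- ψ = 1
        have hψeq : ψ = 1 := by linarith
        have hsr : s = -r := by
          have h1 : -r ≤ s := by linarith [abs_le.1 hsabs |>.1]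
          rw [hψeq] at hs
          linarith
        have hz0 : ‖z - s • nv‖^2 ≤ 0 := by
          rw [norm_sub_sq_real, real_inner_smul_right, hzn, norm_smul, Real.norm_eq_abs, hnv]
          nlinarith [sq_abs s, hsr, mul_le_mul hz hz (norm_nonneg z) hr.le]
        have hzeq : z = s • nv := by
          have h1 : ‖z - s • nv‖ = 0 := by nlinarith [norm_nonneg (z - s • nv)]
          rw [← sub_eq_zero]
          exact norm_eq_zero.1 h1
        have hzb : (inner ℝ z b : ℝ) = s * t₁ := by
          rw [hzeq, real_inner_smul_left, ht₁]
        rw [hzb, hsr, hψeq, ← hκ00]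
        nlinarith []
      · -- ψ = -1
        have hψeq : ψ = -1 := by linarith
        have ht1t2 : t₁ = t₂ := by
          rw [hψeq] at hcase
          have := le_abs_self t₁
          nlinarith
        have h1 := real_inner_le_norm z b
        rw [ht₂] at h1
        rw [hψeq, ← hκ00, ht1t2]
        nlinarith [mul_le_mul_of_nonneg_right hz ht₂0]
    · -- main case κ > 0, A > 0
      have hμ0 : 0 ≤ κ*t₁ + ψ*A := lemA t₁ t₂ A ψ κ ht₂0 hA0 hA2 hκ0 hκ2 hcase
      obtain ⟨v, hvdef⟩ : ∃ v : EuclideanSpace ℝ (Fin n),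
          v = (κ*A) • z + ((-(r*κ^2)) • b + (r*κ*(κ*t₁+ψ*A)) • nv) := ⟨_, rfl⟩
      have hzz : (inner ℝ z z : ℝ) = ‖z‖^2 := real_inner_self_eq_norm_sq z
      have hbb : (inner ℝ b b : ℝ) = t₂^2 := by
        rw [real_inner_self_eq_norm_sq, ht₂]
      have hbz : (inner ℝ b z : ℝ) = (inner ℝ z b : ℝ) := real_inner_comm z b
      have hv : ‖v‖^2 = (κ*A)^2*‖z‖^2 + (r*κ^2)^2*t₂^2 + (r*κ*(κ*t₁+ψ*A))^2
          - 2*(κ*A)*(r*κ^2)*(inner ℝ z b : ℝ) + 2*(κ*A)*(r*κ*(κ*t₁+ψ*A))*s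
          - 2*(r*κ^2)*(r*κ*(κ*t₁+ψ*A))*t₁ := by
        rw [show ‖v‖^2 = (inner ℝ v v : ℝ) from (real_inner_self_eq_norm_sq v).symm, hvdef]
        simp only [inner_add_left, inner_add_right, real_inner_smul_left,
          real_inner_smul_right, hzz, hbb, hbz, hzn, hbn, hnn, hsd, ht₁]
        ring
      have hkey : 2*r*κ^3*A*(inner ℝ z b : ℝ) + 2*r*κ^2*A*(κ*t₁+ψ*A)*(-s-ψ*r)
          + κ^2*A^2*(r^2-‖z‖^2) + ‖v‖^2 = 2*r*κ^3*A*(-ψ*r*t₁ + r*A*κ) := by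
        linear_combination hv - r^2*κ^2*A^2*hκ2 - r^2*κ^4*hA2
      clear hvdef
      have e1 : 0 ≤ 2*r*κ^2*A*(κ*t₁+ψ*A)*(-s-ψ*r) := by
        have h1 : 0 ≤ -s-ψ*r := by linarith
        have h2 : (0:ℝ) ≤ 2*r*κ^2*A := by positivity
        exact mul_nonneg (mul_nonneg h2 hμ0) h1
      have e2 : 0 ≤ κ^2*A^2*(r^2-‖z‖^2) := by
        have h1 : ‖z‖^2 ≤ r^2 := by nlinarith [norm_nonneg z]
        have h2 : (0:ℝ) ≤ κ^2*A^2 := by positivity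
        nlinarith
      have e3 : (0:ℝ) ≤ ‖v‖^2 := by positivity
      have hpos : (0:ℝ) < 2*r*κ^3*A := by positivity
      have h5 : 2*r*κ^3*A*(inner ℝ z b : ℝ) ≤ 2*r*κ^3*A*(-ψ*r*t₁ + r*A*κ) := by
        linarith [hkey, e1, e2, e3]
      exact (mul_le_mul_iff_right₀ hpos).1 h5

theorem stmt8 (n : ℕ) (q nv b : EuclideanSpace ℝ (Fin n)) (r c : ℝ)
    (hr : 0 < r) (hnv : ‖nv‖ = 1)
    (ψ : ℝ) (hψ : ψ = ((inner ℝ nv q : ℝ) - c) / r) (hψ1 : |ψ| ≤ 1) :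
    IsGreatest
      ((fun θ => (inner ℝ θ b : ℝ)) '' (Metric.closedBall q r ∩ {θ | (inner ℝ nv θ : ℝ) ≤ c}))
      ((inner ℝ q b : ℝ) +
        (if (inner ℝ nv b : ℝ) < -ψ * ‖b‖ then r * ‖b‖
         else -ψ * r * (inner ℝ nv b : ℝ) +
           r * Real.sqrt (‖b‖ ^ 2 - (inner ℝ nv b : ℝ) ^ 2) * Real.sqrt (1 - ψ ^ 2))) := by
  have hrne : r ≠ 0 := ne_of_gt hr
  have hrc : (inner ℝ nv q : ℝ) - c = ψ * r := by rw [hψ]; field_simp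
  have habs := abs_le.1 hψ1
  have hψsq : ψ^2 ≤ 1 := by nlinarith [habs.1, habs.2]
  set t₁ := (inner ℝ nv b : ℝ) with ht₁def
  set t₂ := ‖b‖ with ht₂def
  have ht₂0 : 0 ≤ t₂ := norm_nonneg b
  have ht12 : |t₁| ≤ t₂ := by
    simpa [hnv] using abs_real_inner_le_norm nv b
  have ht12' : t₁^2 ≤ t₂^2 := by nlinarith [sq_abs t₁, abs_nonneg t₁]
  set κ := Real.sqrt (1 - ψ^2) with hκdef
  have hκ0 : 0 ≤ κ := Real.sqrt_nonneg _
  have hκ2 : κ^2 = 1 - ψ^2 := Real.sq_sqrt (by linarith)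
  set A := Real.sqrt (t₂^2 - t₁^2) with hAdef
  have hA0 : 0 ≤ A := Real.sqrt_nonneg _
  have hA2 : A^2 = t₂^2 - t₁^2 := Real.sq_sqrt (by linarith)
  have hnn : (inner ℝ nv nv : ℝ) = 1 := by
    rw [real_inner_self_eq_norm_sq, hnv]; norm_num
  clear_value t₁ t₂ κ A
  constructor
  · -- membership
    by_cases hcase : t₁ < -ψ * t₂
    · rw [if_pos hcase]
      have ht₂pos : 0 < t₂ := by nlinarith [neg_abs_le t₁, abs_nonneg t₁]
      refine ⟨q + (r/t₂) • b, ⟨?_, ?_⟩, ?_⟩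
      · rw [Metric.mem_closedBall, dist_eq_norm]
        have heq : q + (r/t₂) • b - q = (r/t₂) • b := by abel
        rw [heq, norm_smul, Real.norm_eq_abs, abs_of_nonneg (by positivity)]
        rw [← ht₂def]
        field_simp
        exact le_refl 1
      · show (inner ℝ nv (q + (r/t₂) • b) : ℝ) ≤ c
        rw [inner_add_right, real_inner_smul_right, ← ht₁def]
        have h1 : (r/t₂) * t₁ ≤ (r/t₂) * (-ψ * t₂) :=
          mul_le_mul_of_nonneg_left hcase.le (by positivity)
        have h2 : (r/t₂) * (-ψ * t₂) = -ψ * r := by field_simp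
        linarith
      · show (inner ℝ (q + (r/t₂) • b) b : ℝ) = (inner ℝ q b : ℝ) + r * t₂
        rw [inner_add_left, real_inner_smul_left, real_inner_self_eq_norm_sq, ← ht₂def]
        field_simp
    · rw [if_neg hcase]
      set u := b - t₁ • nv with hudef
      have hunv : (inner ℝ nv u : ℝ) = 0 := by
        rw [hudef, inner_sub_right, real_inner_smul_right, hnn, ← ht₁def]
        ring
      have hbn : (inner ℝ b nv : ℝ) = t₁ := by rw [real_inner_comm]; exact ht₁def.symm
      have hun2 : ‖u‖^2 = t₂^2 - t₁^2 := by
        rw [hudef, norm_sub_sq_real, real_inner_smul_right, hbn, norm_smul, Real.norm_eq_abs,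
          hnv, ← ht₂def]
        ring_nf
        rw [sq_abs]
        ring
      have hAu : A = ‖u‖ := by rw [hAdef, ← hun2, Real.sqrt_sq (norm_nonneg u)]
      refine ⟨q + ((-(ψ*r)) • nv + (r*κ/‖u‖) • u), ⟨?_, ?_⟩, ?_⟩
      · rw [Metric.mem_closedBall, dist_eq_norm]
        have heq : q + ((-(ψ*r)) • nv + (r*κ/‖u‖) • u) - q = (-(ψ*r)) • nv + (r*κ/‖u‖) • u := by
          abel
        rw [heq]
        have hrκ : r^2*κ^2 = r^2*(1-ψ^2) := by rw [hκ2]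
        have hsq : ‖(-(ψ*r)) • nv + (r*κ/‖u‖) • u‖^2 ≤ r^2 := by
          rw [norm_add_sq_real, real_inner_smul_left, real_inner_smul_right, hunv]
          rw [norm_smul, norm_smul, Real.norm_eq_abs, Real.norm_eq_abs, hnv]
          have h1 : |r*κ/‖u‖| = r*κ/‖u‖ := abs_of_nonneg (by positivity)
          rw [h1]
          by_cases hu : u = 0
          · rw [hu, norm_zero]
            nlinarith [sq_abs (-(ψ*r))]
          · have hune : ‖u‖ ≠ 0 := norm_ne_zero_iff.2 hu
            have h2 : (r*κ/‖u‖ * ‖u‖) = r*κ := by field_simp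
            rw [mul_one, h2]
            nlinarith [sq_abs (-(ψ*r))]
        nlinarith [norm_nonneg ((-(ψ*r)) • nv + (r*κ/‖u‖) • u)]
      · show (inner ℝ nv (q + ((-(ψ*r)) • nv + (r*κ/‖u‖) • u)) : ℝ) ≤ c
        rw [inner_add_right, inner_add_right, real_inner_smul_right, real_inner_smul_right,
          hnn, hunv]
        linarith [hrc]
      · show (inner ℝ (q + ((-(ψ*r)) • nv + (r*κ/‖u‖) • u)) b : ℝ) = _
        rw [inner_add_left, inner_add_left, real_inner_smul_left, real_inner_smul_left, ← ht₁def]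
        have hub : (inner ℝ u b : ℝ) = ‖u‖^2 := by
          rw [hudef, inner_sub_left, real_inner_smul_left, real_inner_self_eq_norm_sq,
            ← ht₂def, ← ht₁def, hun2]
          ring
        rw [hub]
        by_cases hu : u = 0
        · have hA00 : A = 0 := by rw [hAu, hu, norm_zero]
          rw [hA00, hu]
          simp
        · have hune : ‖u‖ ≠ 0 := norm_ne_zero_iff.2 hu
          rw [hAu]
          field_simp
  · -- upper bound
    rintro x ⟨θ, ⟨hball, hhalf⟩, rfl⟩
    simp only
    set z := θ - q with hzdef
    set s := (inner ℝ nv z : ℝ) with hsdef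
    clear_value z s
    have hz : ‖z‖ ≤ r := by
      rw [hzdef]; rwa [Metric.mem_closedBall, dist_eq_norm] at hball
    have hhalf' : (inner ℝ nv θ : ℝ) ≤ c := hhalf
    have hs : s ≤ -(ψ*r) := by
      rw [hsdef, hzdef, inner_sub_right]
      linarith [hrc]
    have hib : (inner ℝ θ b : ℝ) = (inner ℝ q b : ℝ) + (inner ℝ z b : ℝ) := by
      rw [hzdef, inner_sub_left]; ring
    rw [hib]
    by_cases hcase : t₁ < -ψ * t₂
    · rw [if_pos hcase]
      have h1 := real_inner_le_norm z b
      have h2 : ‖z‖ * ‖b‖ ≤ r * t₂ := by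
        rw [← ht₂def]
        exact mul_le_mul_of_nonneg_right hz ht₂0
      linarith
    · rw [if_neg hcase]
      push_neg at hcase
      have h := ubound n nv b z r ψ κ A t₁ t₂ s hr habs.2 hnn hnv ht₁def.symm ht₂def.symm
        hsdef.symm hκ0 hκ2 hA0 hA2 ht12 hz hs hcase
      linarith
end

section
/- Let θ̂ solve the dual lasso problem of maximizing (1/2)‖y‖₂² − (λ²/2)‖θ − y/λ‖₂² subject to |θ^T b_i| ≤ 1 for all i, and let A = {i : |θ̂^T b_i| = 1} be the active set. Let S be any index set with A ⊆ S ⊆ {1,…,p}. If ŵ is any solution of the full lasso problem min_w (1/2)‖y − Bw‖₂² + λ‖w‖₁, then ŵ_i = 0 for all i ∉ S, and the restriction of ŵ to S solves the reduced lasso problem min_z (1/2)‖y − B_S z‖₂² + λ‖z‖₁, where B_S is the submatrix of columns indexed by S. Conversely, if z* solves the reduced problem, then the zero-padded extension of z* to {1,…,p} solves the full lasso problem. -/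
open Finset
lemma inner_sum_smul (d p : ℕ) (θ : EuclideanSpace ℝ (Fin d)) (b : Fin p → EuclideanSpace ℝ (Fin d)) (w : Fin p → ℝ) :
    (inner ℝ θ (∑ i, w i • b i) : ℝ) = ∑ i, w i * inner ℝ θ (b i) := by
  rw [inner_sum]; simp only [real_inner_smul_right]

lemma gap_id (d p : ℕ) (b : Fin p → EuclideanSpace ℝ (Fin d)) (y θ : EuclideanSpace ℝ (Fin d))
    (lam : ℝ) (hlam : 0 < lam) (w : Fin p → ℝ) :
    ((1/2) * ‖y - ∑ i, w i • b i‖ ^ 2 + lam * ∑ i, |w i|)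
      - ((1/2) * ‖y‖ ^ 2 - (lam ^ 2 / 2) * ‖θ - lam⁻¹ • y‖ ^ 2)
    = (1/2) * ‖(y - ∑ i, w i • b i) - lam • θ‖ ^ 2
      + lam * ∑ i, (|w i| - w i * inner ℝ θ (b i)) := by
  have hv : lam • θ - y = lam • (θ - lam⁻¹ • y) := by
    rw [smul_sub, smul_smul, mul_inv_cancel₀ hlam.ne', one_smul]
  set u : EuclideanSpace ℝ (Fin d) := y - ∑ i, w i • b i with hu
  have h1 : (lam ^ 2 / 2) * ‖θ - lam⁻¹ • y‖ ^ 2 = (1/2) * ‖lam • θ - y‖ ^ 2 := by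
    rw [hv, norm_smul, Real.norm_eq_abs, abs_of_pos hlam, mul_pow]; ring
  have h2 : lam * ∑ i, (w i * inner ℝ θ (b i)) = (inner ℝ (lam • θ) (y - u) : ℝ) := by
    have h3 : y - u = ∑ i, w i • b i := by simp [hu]
    rw [h3, real_inner_smul_left, inner_sum_smul, Finset.mul_sum]
  have e1 : ‖lam • θ - y‖ ^ 2 = ‖lam • θ‖^2 - 2 * inner ℝ (lam • θ) y + ‖y‖^2 := by
    rw [@norm_sub_sq_real]
  have e2 : ‖u - lam • θ‖ ^ 2 = ‖u‖^2 - 2 * inner ℝ u (lam • θ) + ‖lam • θ‖^2 := by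
    rw [@norm_sub_sq_real]
  have e3 : (inner ℝ (lam • θ) (y - u) : ℝ) = inner ℝ (lam • θ) y - inner ℝ (lam • θ) u := by
    rw [inner_sub_right]
  have e4 : (inner ℝ u (lam • θ) : ℝ) = inner ℝ (lam • θ) u := real_inner_comm _ _
  have hsplit : ∑ i, (|w i| - w i * inner ℝ θ (b i)) = (∑ i, |w i|) - ∑ i, (w i * inner ℝ θ (b i)) :=
    Finset.sum_sub_distrib _ _
  rw [hsplit, mul_sub, h2, e3, h1]
  linarith [e1, e2, e4]
open Finset

lemma scalar_first_order (a c K lam : ℝ) (hK : 0 ≤ K) (hlam : 0 < lam)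
    (h : ∀ t : ℝ, lam * |a| + t * c ≤ t^2/2 * K + lam * |a + t|) :
    |c| ≤ lam ∧ a * c = lam * |a| := by
  have habs : ∀ t : ℝ, |a + t| ≤ |a| + |t| := fun t => abs_add_le a t
  constructor
  · refine le_of_forall_pos_le_add fun ε hε => ?_
    set s : ℝ := 2*ε/(K+1) with hs
    have hspos : 0 < s := by positivity
    have hsK : s * K / 2 ≤ ε := by
      rw [hs, div_mul_eq_mul_div, div_div, div_le_iff₀ (by linarith)]
      nlinarith
    have hsabs : |s| = s := abs_of_pos hspos
    have e1 : s * c ≤ s^2/2*K + lam * s := by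
      have := habs s; rw [hsabs] at this; nlinarith [h s]
    have e2 : -(s * c) ≤ s^2/2*K + lam * s := by
      have := habs (-s); rw [abs_neg, hsabs] at this; nlinarith [h (-s)]
    have : |c| ≤ s*K/2 + lam := by
      rw [abs_le]
      constructor
      · nlinarith
      · nlinarith
    linarith
  · rcases eq_or_ne a 0 with ha | ha
    · simp [ha]
    · set σ : ℝ := if 0 ≤ a then 1 else -1 with hσ
      have haσ : a * σ = |a| := by
        rcases le_or_gt 0 a with h' | h'
        · simp [hσ, h', abs_of_nonneg h']
        · simp [hσ, not_le.2 h', abs_of_neg h']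
      have hmain : ∀ t : ℝ, |t| ≤ |a| → t * (c - lam * σ) ≤ t^2/2 * K := by
        intro t ht
        have habs2 : |a + t| = |a| + σ * t := by
          rcases le_or_gt 0 a with h' | h'
          · have h0 : 0 < a := lt_of_le_of_ne h' (Ne.symm ha)
            have h4 : 0 ≤ a + t := by
              rw [abs_of_pos h0] at ht
              have := (abs_le.1 ht).1; linarith
            simp [hσ, h', abs_of_nonneg h4, abs_of_pos h0]
          · have h4 : a + t ≤ 0 := by
              rw [abs_of_neg h'] at ht
              have := (abs_le.1 ht).2; linarith
            simp [hσ, not_le.2 h', abs_of_nonpos h4, abs_of_neg h']; ring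
        have := h t
        rw [habs2] at this; nlinarith
      have hane : 0 < |a| := abs_pos.2 ha
      have hkey : |c - lam * σ| ≤ 0 := by
        refine le_of_forall_pos_le_add fun ε hε => ?_
        set s : ℝ := min |a| (2*ε/(K+1)) with hs
        have hspos : 0 < s := lt_min hane (by positivity)
        have hsa : s ≤ |a| := min_le_left _ _
        have hsK : s * K / 2 ≤ ε := by
          have h5 : s ≤ 2*ε/(K+1) := min_le_right _ _
          rw [div_le_iff₀ (by norm_num : (0:ℝ) < 2)]
          calc s * K ≤ (2*ε/(K+1)) * K := by nlinarith
            _ ≤ ε * 2 := by rw [div_mul_eq_mul_div, div_le_iff₀ (by linarith)]; nlinarith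
        have e1 := hmain s (by rwa [abs_of_pos hspos])
        have e2 := hmain (-s) (by rwa [abs_neg, abs_of_pos hspos])
        rw [abs_le]
        constructor
        · nlinarith
        · nlinarith
      have : c = lam * σ := by
        have := abs_nonneg (c - lam * σ)
        have h0 : |c - lam * σ| = 0 := le_antisymm hkey this
        have := abs_eq_zero.1 h0; linarith
      rw [this, ← haσ]; ring
open Finset

lemma sum_update_smul {E : Type*} [AddCommGroup E] [Module ℝ E] (p : ℕ)
    (w : Fin p → ℝ) (v : ℝ) (i : Fin p) (b : Fin p → E) :
    ∑ j, Function.update w i v j • b j = (∑ j, w j • b j) + (v - w i) • b i := by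
  have h : ∀ j, Function.update w i v j • b j
      = w j • b j + (if j = i then (v - w i) • b i else 0) := by
    intro j
    rcases eq_or_ne j i with rfl | hj
    · simp [sub_smul]
    · simp [Function.update_of_ne hj, hj]
  rw [Finset.sum_congr rfl (fun j _ => h j), Finset.sum_add_distrib,
    Finset.sum_ite_eq' Finset.univ i]
  simp

lemma sum_update_abs (p : ℕ) (w : Fin p → ℝ) (v : ℝ) (i : Fin p) :
    ∑ j, |Function.update w i v j| = (∑ j, |w j|) + (|v| - |w i|) := by
  have h : ∀ j, |Function.update w i v j|
      = |w j| + (if j = i then |v| - |w i| else 0) := by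
    intro j
    rcases eq_or_ne j i with rfl | hj
    · simp
    · simp [Function.update_of_ne hj, hj]
  rw [Finset.sum_congr rfl (fun j _ => h j), Finset.sum_add_distrib,
    Finset.sum_ite_eq' Finset.univ i]
  simp

-- perturbation inequality at a minimizer
lemma perturb (d p : ℕ) (b : Fin p → EuclideanSpace ℝ (Fin d)) (y : EuclideanSpace ℝ (Fin d))
    (lam : ℝ) (f : (Fin p → ℝ) → ℝ)
    (hf : ∀ w, f w = (1/2) * ‖y - ∑ i, w i • b i‖ ^ 2 + lam * ∑ i, |w i|)
    (wh : Fin p → ℝ) (hmin : ∀ w, f wh ≤ f w) (i : Fin p) (t : ℝ) :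
    lam * |wh i| + t * (inner ℝ (y - ∑ j, wh j • b j) (b i) : ℝ)
      ≤ t^2/2 * ‖b i‖^2 + lam * |wh i + t| := by
  set r : EuclideanSpace ℝ (Fin d) := y - ∑ j, wh j • b j with hr
  have h1 := hmin (Function.update wh i (wh i + t))
  rw [hf, hf, sum_update_smul, sum_update_abs] at h1
  have h2 : y - ((∑ j, wh j • b j) + (wh i + t - wh i) • b i) = r - t • b i := by
    rw [hr]; rw [add_sub_cancel_left]; abel
  rw [h2] at h1
  have h3 : ‖r - t • b i‖^2 = ‖r‖^2 - 2 * (t * inner ℝ r (b i)) + t^2 * ‖b i‖^2 := by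
    rw [@norm_sub_sq_real, real_inner_smul_right, norm_smul, Real.norm_eq_abs, mul_pow, sq_abs]
  rw [h3] at h1
  linarith

-- existence of a global minimizer
lemma lasso_min_exists (d p : ℕ) (b : Fin p → EuclideanSpace ℝ (Fin d)) (y : EuclideanSpace ℝ (Fin d))
    (lam : ℝ) (hlam : 0 < lam) (f : (Fin p → ℝ) → ℝ)
    (hf : ∀ w, f w = (1/2) * ‖y - ∑ i, w i • b i‖ ^ 2 + lam * ∑ i, |w i|) :
    ∃ w0 : Fin p → ℝ, ∀ w, f w0 ≤ f w := by
  have hcont : Continuous f := by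
    have : f = fun w => (1/2) * ‖y - ∑ i, w i • b i‖ ^ 2 + lam * ∑ i, |w i| :=
      funext hf
    rw [this]
    refine Continuous.add ?_ ?_
    · refine Continuous.mul continuous_const ?_
      refine Continuous.pow ?_ 2
      refine Continuous.norm ?_
      exact continuous_const.sub (continuous_finset_sum _ fun i _ =>
        (continuous_apply i).smul continuous_const)
    · exact continuous_const.mul (continuous_finset_sum _ fun i _ =>
        (continuous_apply i).abs)
  have hlb : ∀ w : Fin p → ℝ, lam * ‖w‖ ≤ f w := by
    intro w
    have h1 : ‖w‖ ≤ ∑ i, |w i| := by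
      have h2 : ∀ i, ‖w i‖ ≤ ∑ j, |w j| := fun i => by
        rw [Real.norm_eq_abs]
        exact Finset.single_le_sum (fun j _ => abs_nonneg (w j)) (Finset.mem_univ i)
      exact pi_norm_le_iff_of_nonneg (Finset.sum_nonneg fun j _ => abs_nonneg _) |>.2 h2
    rw [hf]
    nlinarith [sq_nonneg ‖y - ∑ i, w i • b i‖, norm_nonneg w]
  set R : ℝ := f 0 / lam with hR
  have hf0 : 0 ≤ f 0 := le_trans (by simp) (hlb 0)
  have hRnn : 0 ≤ R := div_nonneg hf0 hlam.le
  obtain ⟨w0, hw0K, hw0⟩ := (isCompact_closedBall (0 : Fin p → ℝ) R).exists_isMinOn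
    ⟨0, Metric.mem_closedBall_self hRnn⟩ hcont.continuousOn
  refine ⟨w0, fun w => ?_⟩
  rcases le_or_gt ‖w‖ R with hw | hw
  · exact hw0 (by simpa [Metric.mem_closedBall, dist_zero_right] using hw)
  · have h1 : f 0 < f w := by
      have := hlb w
      have h2 : lam * R < lam * ‖w‖ := by exact mul_lt_mul_of_pos_left hw hlam
      rw [hR, mul_div_cancel₀ _ hlam.ne'] at h2
      linarith
    have h0 : f w0 ≤ f 0 := hw0 (Metric.mem_closedBall_self hRnn)
    linarith

lemma weak_dual (d p : ℕ) (b : Fin p → EuclideanSpace ℝ (Fin d)) (y θ : EuclideanSpace ℝ (Fin d))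
    (lam : ℝ) (hlam : 0 < lam) (hfeas : ∀ i, |(inner ℝ θ (b i) : ℝ)| ≤ 1) (w : Fin p → ℝ) :
    (1/2) * ‖y‖ ^ 2 - (lam ^ 2 / 2) * ‖θ - lam⁻¹ • y‖ ^ 2
      ≤ (1/2) * ‖y - ∑ i, w i • b i‖ ^ 2 + lam * ∑ i, |w i| := by
  have hgap := gap_id d p b y θ lam hlam w
  have h1 : 0 ≤ ‖(y - ∑ i, w i • b i) - lam • θ‖ ^ 2 := sq_nonneg _
  have h2 : 0 ≤ ∑ i, (|w i| - w i * inner ℝ θ (b i)) := by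
    refine Finset.sum_nonneg fun i _ => ?_
    have h3 : w i * inner ℝ θ (b i) ≤ |w i| := by
      calc w i * inner ℝ θ (b i) ≤ |w i * inner ℝ θ (b i)| := le_abs_self _
        _ = |w i| * |(inner ℝ θ (b i) : ℝ)| := abs_mul _ _
        _ ≤ |w i| * 1 := mul_le_mul_of_nonneg_left (hfeas i) (abs_nonneg _)
        _ = |w i| := mul_one _
    linarith
  nlinarith

theorem stmt11 (d p : ℕ)
    (b : Fin p → EuclideanSpace ℝ (Fin d)) (y : EuclideanSpace ℝ (Fin d))
    (lam : ℝ) (hlam : 0 < lam)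
    (f : (Fin p → ℝ) → ℝ)
    (hf : ∀ w, f w = (1/2) * ‖y - ∑ i, w i • b i‖ ^ 2 + lam * ∑ i, |w i|)
    (g : EuclideanSpace ℝ (Fin d) → ℝ)
    (hg : ∀ θ, g θ = (1/2) * ‖y‖ ^ 2 - (lam ^ 2 / 2) * ‖θ - lam⁻¹ • y‖ ^ 2)
    (θh : EuclideanSpace ℝ (Fin d))
    (hθfeas : ∀ i, |(inner ℝ θh (b i) : ℝ)| ≤ 1)
    (hθopt : ∀ θ, (∀ i, |(inner ℝ θ (b i) : ℝ)| ≤ 1) → g θ ≤ g θh)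
    (S : Set (Fin p)) (hS : ∀ i, |(inner ℝ θh (b i) : ℝ)| = 1 → i ∈ S) :
    (∀ wh : Fin p → ℝ, (∀ w, f wh ≤ f w) →
      (∀ i ∉ S, wh i = 0) ∧ (∀ z : Fin p → ℝ, (∀ i ∉ S, z i = 0) → f wh ≤ f z)) ∧
    (∀ zs : Fin p → ℝ, (∀ i ∉ S, zs i = 0) →
      (∀ z : Fin p → ℝ, (∀ i ∉ S, z i = 0) → f zs ≤ f z) →
      ∀ w, f zs ≤ f w) := by
  -- key support lemma
  have key : ∀ wh : Fin p → ℝ, (∀ w, f wh ≤ f w) → ∀ i ∉ S, wh i = 0 := by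
    intro wh hmin i hiS
    set r : EuclideanSpace ℝ (Fin d) := y - ∑ j, wh j • b j with hr
    set θ : EuclideanSpace ℝ (Fin d) := lam⁻¹ • r with hθ
    have hfo : ∀ j, |(inner ℝ r (b j) : ℝ)| ≤ lam ∧ wh j * inner ℝ r (b j) = lam * |wh j| :=
      fun j => scalar_first_order (wh j) (inner ℝ r (b j)) (‖b j‖^2) lam (sq_nonneg _) hlam
        (fun t => perturb d p b y lam f hf wh hmin j t)
    have hθin : ∀ j, (inner ℝ θ (b j) : ℝ) = lam⁻¹ * inner ℝ r (b j) := fun j => by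
      rw [hθ, real_inner_smul_left]
    have hfeasθ : ∀ j, |(inner ℝ θ (b j) : ℝ)| ≤ 1 := by
      intro j
      rw [hθin j, abs_mul, abs_of_pos (inv_pos.2 hlam)]
      calc lam⁻¹ * |(inner ℝ r (b j) : ℝ)| ≤ lam⁻¹ * lam :=
            mul_le_mul_of_nonneg_left (hfo j).1 (inv_pos.2 hlam).le
        _ = 1 := inv_mul_cancel₀ hlam.ne'
    -- strong duality : f wh = g θ
    have hgapz : f wh = g θ := by
      have hgap := gap_id d p b y θ lam hlam wh
      have hz1 : (y - ∑ i, wh i • b i) - lam • θ = 0 := by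
        rw [hθ, smul_smul, mul_inv_cancel₀ hlam.ne', one_smul, hr]
        abel
      have hz2 : ∑ j, (|wh j| - wh j * inner ℝ θ (b j)) = 0 := by
        refine Finset.sum_eq_zero fun j _ => ?_
        rw [hθin j, ← mul_assoc, mul_comm (wh j) lam⁻¹, mul_assoc, (hfo j).2,
          ← mul_assoc, inv_mul_cancel₀ hlam.ne', one_mul, sub_self]
      rw [hz1, hz2] at hgap
      simp only [norm_zero, mul_zero, add_zero] at hgap
      rw [hf, hg]
      linarith [hgap]
    -- θ is dual optimal, hence θ = θh
    have hgeq : g θ = g θh := by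
      have h1 : g θ ≤ g θh := hθopt θ hfeasθ
      have h2 : g θh ≤ f wh := by
        rw [hf wh, hg θh]; exact weak_dual d p b y θh lam hlam hθfeas wh
      linarith [hgapz]
    have hθeq : θ = θh := by
      set u : EuclideanSpace ℝ (Fin d) := lam⁻¹ • y with hu
      set x : EuclideanSpace ℝ (Fin d) := θ - u with hx
      set z : EuclideanSpace ℝ (Fin d) := θh - u with hz
      have hxz : ‖x‖^2 = ‖z‖^2 := by
        have := hgeq
        rw [hg, hg] at this
        have hl : (0:ℝ) < lam^2/2 := by positivity
        have := sub_eq_zero.2 this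
        nlinarith
      set m : EuclideanSpace ℝ (Fin d) := (2:ℝ)⁻¹ • (θ + θh) with hm
      have hmfeas : ∀ j, |(inner ℝ m (b j) : ℝ)| ≤ 1 := by
        intro j
        rw [hm, real_inner_smul_left, inner_add_left]
        rw [abs_mul, abs_of_pos (by norm_num : (0:ℝ) < (2:ℝ)⁻¹)]
        calc (2:ℝ)⁻¹ * |(inner ℝ θ (b j) : ℝ) + inner ℝ θh (b j)|
            ≤ (2:ℝ)⁻¹ * (|(inner ℝ θ (b j) : ℝ)| + |(inner ℝ θh (b j) : ℝ)|) := by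
              refine mul_le_mul_of_nonneg_left (abs_add_le _ _) (by norm_num)
          _ ≤ (2:ℝ)⁻¹ * (1 + 1) := by
              refine mul_le_mul_of_nonneg_left (add_le_add (hfeasθ j) (hθfeas j)) (by norm_num)
          _ = 1 := by norm_num
      have hgm : g m ≤ g θh := hθopt m hmfeas
      have hmu : m - u = (2:ℝ)⁻¹ • (x + z) := by
        rw [hm, hx, hz]
        module
      have hnm : ‖m - u‖^2 = (1/4) * ‖x + z‖^2 := by
        rw [hmu, norm_smul, Real.norm_eq_abs, mul_pow]
        norm_num
      have hpar : ‖x + z‖*‖x + z‖ + ‖x - z‖*‖x - z‖ = 2*(‖x‖*‖x‖ + ‖z‖*‖z‖) :=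
        by simpa only [sq] using parallelogram_law_with_norm ℝ x z
      have hxz0 : ‖x - z‖^2 ≤ 0 := by
        rw [hg, hg] at hgm
        have hl : (0:ℝ) < lam^2/2 := by positivity
        have hgm' : (lam^2/2) * ‖z‖^2 ≤ (lam^2/2) * ‖m - u‖^2 := by
          rw [hu] at hgm ⊢
          linarith [hgm]
        rw [hnm] at hgm'
        nlinarith [hpar, hxz]
      have : x - z = 0 := by
        have h0 : ‖x - z‖^2 = 0 := le_antisymm hxz0 (sq_nonneg _)
        have := pow_eq_zero_iff (n := 2) (by norm_num) |>.1 h0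
        exact norm_eq_zero.1 this
      have : x = z := sub_eq_zero.1 this
      rw [hx, hz] at this
      have := sub_left_injective.eq_iff.1 this
      exact this
    -- conclude wh i = 0
    have hlt : |(inner ℝ θh (b i) : ℝ)| < 1 :=
      lt_of_le_of_ne (hθfeas i) (fun h => hiS (hS i h))
    have hsub : wh i * (inner ℝ θh (b i) : ℝ) = |wh i| := by
      have h1 : (inner ℝ θh (b i) : ℝ) = lam⁻¹ * inner ℝ r (b i) := by
        rw [← hθeq]; exact hθin i
      rw [h1, ← mul_assoc, mul_comm (wh i) lam⁻¹, mul_assoc, (hfo i).2,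
        ← mul_assoc, inv_mul_cancel₀ hlam.ne', one_mul]
    by_contra hne
    have h0 : 0 < |wh i| := abs_pos.2 hne
    have : |wh i| < |wh i| := by
      calc |wh i| = wh i * (inner ℝ θh (b i) : ℝ) := hsub.symm
        _ ≤ |wh i * (inner ℝ θh (b i) : ℝ)| := le_abs_self _
        _ = |wh i| * |(inner ℝ θh (b i) : ℝ)| := abs_mul _ _
        _ < |wh i| * 1 := by exact mul_lt_mul_of_pos_left hlt h0
        _ = |wh i| := mul_one _
    exact absurd this (lt_irrefl _)
  refine ⟨fun wh hmin => ⟨key wh hmin, fun z _ => hmin z⟩, ?_⟩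
  intro zs hzs hzopt w
  obtain ⟨w0, hw0⟩ := lasso_min_exists d p b y lam hlam f hf
  calc f zs ≤ f w0 := hzopt w0 (key w0 hw0)
    _ ≤ f w := hw0 w
end

section
/- Let θ̂ solve the dual lasso problem and suppose R ⊆ R^n is a compact set with θ̂ ∈ R. If a feature b_i satisfies max_{θ ∈ R} |θ^T b_i| < 1, then for every solution ŵ of the lasso problem min_w (1/2)‖y − Bw‖₂² + λ‖w‖₁, the i-th coordinate ŵ_i = 0. -/
open scoped RealInnerProductSpace

/-- scalar KKT lemma -/
lemma key_kkt (C c lam a : ℝ) (hC : 0 ≤ C) (hlam : 0 < lam)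
    (h : ∀ t : ℝ, 0 ≤ -(t*c) + t^2*C/2 + lam*(|a+t| - |a|)) :
    |c| ≤ lam ∧ c * a = lam * |a| := by
  have habs : |c| ≤ lam := by
    refine le_of_forall_pos_le_add (fun ε hε => ?_)
    set s : ℝ := 2*ε/(C+1) with hs
    have hspos : 0 < s := by positivity
    have hsC : s*C/2 ≤ ε := by
      rw [hs, div_mul_eq_mul_div, div_div, div_le_iff₀ (by positivity)]
      nlinarith
    -- choose t with t*c = s*|c|
    rcases le_or_gt 0 c with hc | hc
    · have := h s
      have habs2 : |a+s| - |a| ≤ s := by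
        have := abs_add_le a s
        have : |a + s| ≤ |a| + s := by simpa [abs_of_nonneg hspos.le] using abs_add_le a s
        linarith
      have : 0 ≤ -(s*c) + s^2*C/2 + lam*s := by nlinarith [h s]
      have : c ≤ lam + s*C/2 := by nlinarith
      rw [abs_of_nonneg hc]; linarith
    · have habs2 : |a+(-s)| - |a| ≤ s := by
        have : |a + (-s)| ≤ |a| + s := by
          calc |a + (-s)| ≤ |a| + |(-s)| := abs_add_le a (-s)
          _ = |a| + s := by rw [abs_neg, abs_of_nonneg hspos.le]
        linarith
      have : 0 ≤ -((-s)*c) + (-s)^2*C/2 + lam*s := by nlinarith [h (-s)]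
      have : -c ≤ lam + s*C/2 := by nlinarith
      rw [abs_of_neg hc]; linarith
  refine ⟨habs, ?_⟩
  rcases eq_or_ne a 0 with ha | ha
  · simp [ha]
  · -- show sign(a)*c = lam
    have hapos : 0 < |a| := abs_pos.mpr ha
    have hsgn : lam ≤ (if 0 ≤ a then c else -c) := by
      refine le_of_forall_pos_le_add (fun ε hε => ?_)
      set s : ℝ := min (2*ε/(C+1)) |a| with hs
      have hspos : 0 < s := lt_min (by positivity) hapos
      have hsa : s ≤ |a| := min_le_right _ _
      have hsC : s*C/2 ≤ ε := by
        have h1 : s ≤ 2*ε/(C+1) := min_le_left _ _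
        have h2 : (2*ε/(C+1))*C/2 ≤ ε := by
          rw [div_mul_eq_mul_div, div_div, div_le_iff₀ (by positivity)]
          nlinarith
        nlinarith [mul_le_mul_of_nonneg_right h1 hC]
      rcases le_or_gt 0 a with hA | hA
      · -- t = -s ; a ≥ 0, |a| = a, |a - s| = a - s
        have hsa' : s ≤ a := by rwa [abs_of_nonneg hA] at hsa
        have habs2 : |a + (-s)| - |a| = -s := by
          rw [abs_of_nonneg hA, abs_of_nonneg (by linarith : (0:ℝ) ≤ a + (-s))]
          ring
        have h0 := h (-s)
        rw [habs2] at h0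
        have : lam ≤ c + s*C/2 := by nlinarith
        simp only [if_pos hA]; linarith
      · -- t = s ; a < 0, |a| = -a, |a + s| = -(a+s) = -a - s
        have habs2 : |a + s| - |a| = -s := by
          rw [abs_of_neg hA, abs_of_nonpos (by rw [abs_of_neg hA] at hsa; linarith : a + s ≤ 0)]
          ring
        have h0 := h s
        rw [habs2] at h0
        have : lam ≤ -c + s*C/2 := by nlinarith
        simp only [if_neg (not_le.mpr hA)]; linarith
    rcases le_or_gt 0 a with hA | hA
    · simp only [if_pos hA] at hsgn
      have : c ≤ |c| := le_abs_self c
      have hceq : c = lam := le_antisymm (this.trans habs) hsgn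
      rw [hceq, abs_of_nonneg hA]
    · simp only [if_neg (not_le.mpr hA)] at hsgn
      have : -c ≤ |c| := neg_le_abs c
      have hceq : -c = lam := le_antisymm (this.trans habs) hsgn
      rw [abs_of_neg hA]; nlinarith

set_option maxHeartbeats 1000000 in
theorem stmt12 (d p : ℕ)
    (b : Fin p → EuclideanSpace ℝ (Fin d)) (y : EuclideanSpace ℝ (Fin d))
    (lam : ℝ) (hlam : 0 < lam)
    (f : (Fin p → ℝ) → ℝ)
    (hf : ∀ w, f w = (1/2) * ‖y - ∑ i, w i • b i‖ ^ 2 + lam * ∑ i, |w i|)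
    (θh : EuclideanSpace ℝ (Fin d))
    (hθfeas : ∀ j, |(inner ℝ θh (b j) : ℝ)| ≤ 1)
    (hθproj : ∀ θ : EuclideanSpace ℝ (Fin d), (∀ j, |(inner ℝ θ (b j) : ℝ)| ≤ 1) →
      ‖θh - lam⁻¹ • y‖ ≤ ‖θ - lam⁻¹ • y‖)
    (R : Set (EuclideanSpace ℝ (Fin d))) (hR : IsCompact R) (hθR : θh ∈ R)
    (i : Fin p)
    (hrej : sSup ((fun θ => |(inner ℝ θ (b i) : ℝ)|) '' R) < 1) :
    ∀ wh : Fin p → ℝ, (∀ w, f wh ≤ f w) → wh i = 0 := by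
  intro wh hopt
  set S : EuclideanSpace ℝ (Fin d) := ∑ j, wh j • b j with hS
  set r : EuclideanSpace ℝ (Fin d) := y - S with hr
  -- Step 1: first order inequality for each coordinate
  have hstep : ∀ (j : Fin p) (t : ℝ),
      0 ≤ -(t * ⟪r, b j⟫) + t^2 * ‖b j‖^2 / 2 + lam * (|wh j + t| - |wh j|) := by
    intro j t
    set w' : Fin p → ℝ := Function.update wh j (wh j + t) with hw'
    have hsum1 : ∑ k, w' k • b k = S + t • b j := by
      have : ∀ k, w' k • b k = wh k • b k + (if k = j then t • b j else 0) := by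
        intro k
        by_cases hk : k = j
        · subst hk; simp [hw', Function.update_self, add_smul]
        · simp [hw', Function.update_of_ne hk, hk]
      rw [Finset.sum_congr rfl (fun k _ => this k), Finset.sum_add_distrib,
        Finset.sum_ite_eq' Finset.univ j (fun _ => t • b j)]
      simp [hS]
    have hsum2 : ∑ k, |w' k| = (∑ k, |wh k|) + (|wh j + t| - |wh j|) := by
      have : ∀ k, |w' k| = |wh k| + (if k = j then |wh j + t| - |wh j| else 0) := by
        intro k
        by_cases hk : k = j
        · subst hk; simp [hw', Function.update_self]
        · simp [hw', Function.update_of_ne hk, hk]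
      rw [Finset.sum_congr rfl (fun k _ => this k), Finset.sum_add_distrib,
        Finset.sum_ite_eq' Finset.univ j (fun _ => |wh j + t| - |wh j|)]
      simp
    have hnorm : ‖y - ∑ k, w' k • b k‖^2
        = ‖r‖^2 - 2*(t*⟪r, b j⟫) + t^2*‖b j‖^2 := by
      rw [hsum1]
      have : y - (S + t • b j) = r - t • b j := by rw [hr]; abel
      rw [this, norm_sub_sq_real, real_inner_smul_right, norm_smul, mul_pow, Real.norm_eq_abs, sq_abs]
    have h0 := hopt w'
    rw [hf wh, hf w', hnorm, hsum2] at h0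
    simp only [← hr] at h0
    nlinarith [h0]
  have hkkt : ∀ j : Fin p, |⟪r, b j⟫| ≤ lam ∧ ⟪r, b j⟫ * wh j = lam * |wh j| :=
    fun j => key_kkt (‖b j‖^2) ⟪r, b j⟫ lam (wh j) (by positivity) hlam (hstep j)
  -- Step 2: θ* is feasible
  set θs : EuclideanSpace ℝ (Fin d) := lam⁻¹ • r with hθs
  have hθsb : ∀ j, ⟪θs, b j⟫ = lam⁻¹ * ⟪r, b j⟫ := by
    intro j; rw [hθs, real_inner_smul_left]
  have hfeass : ∀ j, |(inner ℝ θs (b j) : ℝ)| ≤ 1 := by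
    intro j
    have : |(inner ℝ θs (b j) : ℝ)| = lam⁻¹ * |⟪r, b j⟫| := by
      rw [hθsb j, abs_mul, abs_of_pos (inv_pos.mpr hlam)]
    rw [this]
    calc lam⁻¹ * |⟪r, b j⟫| ≤ lam⁻¹ * lam :=
          mul_le_mul_of_nonneg_left (hkkt j).1 (inv_pos.mpr hlam).le
      _ = 1 := inv_mul_cancel₀ hlam.ne'
  -- Step 3: variational inequality ⇒ θh = θs
  have hVI : ⟪lam⁻¹ • y - θs, θh - θs⟫ ≤ 0 := by
    have heq : lam⁻¹ • y - θs = lam⁻¹ • S := by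
      rw [hθs, ← smul_sub, hr]; congr 1; abel
    rw [heq, real_inner_smul_left]
    have hsum : ⟪S, θh - θs⟫ = ∑ j, wh j * ⟪b j, θh - θs⟫ := by
      rw [hS, sum_inner]
      exact Finset.sum_congr rfl fun j _ => real_inner_smul_left _ _ _
    have hterm : ∀ j, wh j * ⟪b j, θh - θs⟫ ≤ 0 := by
      intro j
      rw [inner_sub_right]
      have h1 : ⟪b j, θh⟫ = ⟪θh, b j⟫ := real_inner_comm _ _
      have h2 : ⟪b j, θs⟫ = lam⁻¹ * ⟪r, b j⟫ := by
        rw [real_inner_comm]; exact hθsb j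
      have h3 : wh j * ⟪b j, θh⟫ ≤ |wh j| := by
        calc wh j * ⟪b j, θh⟫ ≤ |wh j * ⟪b j, θh⟫| := le_abs_self _
          _ = |wh j| * |⟪θh, b j⟫| := by rw [abs_mul, h1]
          _ ≤ |wh j| * 1 := mul_le_mul_of_nonneg_left (hθfeas j) (abs_nonneg _)
          _ = |wh j| := mul_one _
      have h4 : wh j * ⟪b j, θs⟫ = |wh j| := by
        rw [h2]
        have h5 : wh j * (lam⁻¹ * ⟪r, b j⟫) = lam⁻¹ * (⟪r, b j⟫ * wh j) := by ring
        rw [h5, (hkkt j).2, ← mul_assoc, inv_mul_cancel₀ hlam.ne', one_mul]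
      nlinarith [h3, h4]
    have : ⟪S, θh - θs⟫ ≤ 0 := by
      rw [hsum]; exact Finset.sum_nonpos fun j _ => hterm j
    have hinv : (0:ℝ) ≤ lam⁻¹ := (inv_pos.mpr hlam).le
    nlinarith [this]
  have hle : ‖θh - lam⁻¹ • y‖ ≤ ‖θs - lam⁻¹ • y‖ := hθproj θs hfeass
  clear_value S r θs
  have hθeq : θh = θs := by
    set c : EuclideanSpace ℝ (Fin d) := lam⁻¹ • y with hc
    have hexp : ‖θh - c‖^2
        = ‖θh - θs‖^2 + 2*⟪θh - θs, θs - c⟫ + ‖θs - c‖^2 := by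
      have : θh - c = (θh - θs) + (θs - c) := by abel
      rw [this, norm_add_sq_real]
    have hip : 0 ≤ ⟪θh - θs, θs - c⟫ := by
      have : ⟪θh - θs, θs - c⟫ = -⟪c - θs, θh - θs⟫ := by
        rw [real_inner_comm, ← inner_neg_left]
        congr 1; abel
      rw [this]; linarith [hVI]
    have hsq : ‖θh - c‖^2 ≤ ‖θs - c‖^2 := by
      have := hle
      nlinarith [norm_nonneg (θh - c), norm_nonneg (θs - c)]
    have : ‖θh - θs‖^2 ≤ 0 := by nlinarith
    have : ‖θh - θs‖ = 0 := by nlinarith [norm_nonneg (θh - θs), sq_nonneg ‖θh - θs‖]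
    have := norm_eq_zero.mp this
    exact sub_eq_zero.mp this
  -- Step 4: bound |⟪θh, b i⟫| < 1
  have hcont : Continuous fun θ : EuclideanSpace ℝ (Fin d) => |(inner ℝ θ (b i) : ℝ)| :=
    (continuous_id.inner continuous_const).abs
  have hbdd : BddAbove ((fun θ => |(inner ℝ θ (b i) : ℝ)|) '' R) :=
    (hR.image hcont).bddAbove
  have hmem : |(inner ℝ θh (b i) : ℝ)| ∈ (fun θ => |(inner ℝ θ (b i) : ℝ)|) '' R :=
    Set.mem_image_of_mem _ hθR
  have hlt : |⟪θh, b i⟫| < 1 := lt_of_le_of_lt (le_csSup hbdd hmem) hrej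
  -- Step 5: conclude
  by_contra hne
  have hwi : 0 < |wh i| := abs_pos.mpr hne
  have h2 := (hkkt i).2
  have h5 : lam ≤ |⟪r, b i⟫| := by
    have : lam * |wh i| ≤ |⟪r, b i⟫| * |wh i| := by
      calc lam * |wh i| = ⟪r, b i⟫ * wh i := h2.symm
        _ ≤ |⟪r, b i⟫ * wh i| := le_abs_self _
        _ = |⟪r, b i⟫| * |wh i| := abs_mul _ _
    exact le_of_mul_le_mul_right this hwi
  have h6 : (1:ℝ) ≤ |⟪θh, b i⟫| := by
    rw [hθeq]
    have : |⟪θs, b i⟫| = lam⁻¹ * |⟪r, b i⟫| := by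
      rw [hθsb i, abs_mul, abs_of_pos (inv_pos.mpr hlam)]
    rw [this]
    calc (1:ℝ) = lam⁻¹ * lam := (inv_mul_cancel₀ hlam.ne').symm
      _ ≤ lam⁻¹ * |⟪r, b i⟫| := mul_le_mul_of_nonneg_left h5 (inv_pos.mpr hlam).le
  linarith
end

section
/- Let θ̂ be the projection of y/λ onto F = {θ : |θ^T b_j| ≤ 1 ∀ j} (the dual lasso solution) and let ŵ solve the lasso. The sphere screening test with center q = y/λ and radius r = ‖y/λ − θ̂_f‖₂, for any feasible θ_f ∈ F, is safe: if |q^T b_i| < 1 − r‖b_i‖₂ then ŵ_i = 0. -/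
open RealInnerProductSpace Finset

set_option maxHeartbeats 1600000 in
theorem stmt13 (d p : ℕ)
    (b : Fin p → EuclideanSpace ℝ (Fin d)) (y : EuclideanSpace ℝ (Fin d))
    (lam : ℝ) (hlam : 0 < lam)
    (f : (Fin p → ℝ) → ℝ)
    (hf : ∀ w, f w = (1/2) * ‖y - ∑ i, w i • b i‖ ^ 2 + lam * ∑ i, |w i|)
    (wh : Fin p → ℝ) (hopt : ∀ w, f wh ≤ f w)
    (θf : EuclideanSpace ℝ (Fin d)) (hθf : ∀ j, |(inner ℝ θf (b j) : ℝ)| ≤ 1)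
    (r : ℝ) (hr : r = ‖lam⁻¹ • y - θf‖)
    (i : Fin p)
    (htest : |(inner ℝ (lam⁻¹ • y) (b i) : ℝ)| < 1 - r * ‖b i‖) :
    wh i = 0 := by
  set S : EuclideanSpace ℝ (Fin d) := ∑ k, wh k • b k with hS
  set u : EuclideanSpace ℝ (Fin d) := y - S with hu
  -- Lemma A: variational inequality
  have key : ∀ (j : Fin p) (t : ℝ),
      0 ≤ -(t * ⟪u, b j⟫) + t^2/2 * ‖b j‖^2 + lam * (|wh j + t| - |wh j|) := by
    intro j t
    set w : Fin p → ℝ := fun k => if k = j then wh j + t else wh k with hw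
    have hsum : ∑ k, w k • b k = S + t • b j := by
      have h1 : ∀ k ∈ Finset.univ, w k • b k = wh k • b k + (if k = j then t • b j else 0) := by
        intro k _
        by_cases h : k = j
        · subst h; simp [hw, add_smul]
        · simp [hw, h]
      rw [Finset.sum_congr rfl h1, Finset.sum_add_distrib, Finset.sum_ite_eq' Finset.univ j]
      simp [hS]
    have habs : ∑ k, |w k| = (∑ k, |wh k|) + (|wh j + t| - |wh j|) := by
      have h1 : ∀ k ∈ Finset.univ, |w k| = |wh k| + (if k = j then |wh j + t| - |wh j| else 0) := by
        intro k _
        by_cases h : k = j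
        · subst h; simp [hw]
        · simp [hw, h]
      rw [Finset.sum_congr rfl h1, Finset.sum_add_distrib, Finset.sum_ite_eq' Finset.univ j]
      simp
    have hle := hopt w
    rw [hf w, hf wh, hsum, habs] at hle
    have hexp : y - (S + t • b j) = u - t • b j := by rw [hu]; abel
    rw [hexp] at hle
    have hns : ‖u - t • b j‖^2 = ‖u‖^2 - 2 * (t * ⟪u, b j⟫) + t^2 * ‖b j‖^2 := by
      rw [norm_sub_sq_real, real_inner_smul_right, norm_smul, mul_pow, Real.norm_eq_abs,
        sq_abs]
    rw [hns] at hle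
    have : y - S = u := rfl
    rw [this] at hle
    nlinarith [hle]
  -- Lemma B: if wh j ≠ 0 then inner u (b j) = lam * sign
  have kkt : ∀ j : Fin p, wh j ≠ 0 → |⟪u, b j⟫| = lam ∧ ⟪u, b j⟫ * wh j = lam * |wh j| := by
    intro j hj
    set c : ℝ := ⟪u, b j⟫ with hc
    set s : ℝ := if 0 < wh j then 1 else -1 with hsdef
    have hswh : s * wh j = |wh j| := by
      rcases lt_trichotomy 0 (wh j) with h | h | h
      · simp [hsdef, h, abs_of_pos h]
      · exact absurd h.symm hj
      · rw [hsdef, if_neg (by linarith), abs_of_neg h]; ring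
    have hs1 : |s| = 1 := by rcases le_or_gt s 0 with h | h <;> simp [hsdef] at * <;> split_ifs <;> simp
    have habs' : ∀ t : ℝ, |t| < |wh j| → |wh j + t| = |wh j| + s * t := by
      intro t ht
      rcases lt_trichotomy 0 (wh j) with h | h | h
      · rw [hsdef, if_pos h, one_mul, abs_of_pos h, abs_of_pos (by cases abs_lt.mp ht; linarith [abs_of_pos h])]
      · exact absurd h.symm hj
      · rw [hsdef, if_neg (by linarith), abs_of_neg h]
        have : wh j + t < 0 := by cases abs_lt.mp (by rwa [abs_of_neg h] at ht); linarith
        rw [abs_of_neg this]; ring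
    set D : ℝ := lam * s - c with hD
    set K : ℝ := ‖b j‖^2 with hK
    have hK0 : 0 ≤ K := by positivity
    have hDbound : ∀ t : ℝ, |t| < |wh j| → 0 ≤ t * D + t^2/2 * K := by
      intro t ht
      have := key j t
      rw [habs' t ht] at this
      have h2 : |wh j| + s * t - |wh j| = s * t := by ring
      rw [h2] at this
      rw [hD, hc, hK]
      linarith [this]
    have hDzero : D = 0 := by
      by_contra hDne
      have hwj : 0 < |wh j| := abs_pos.mpr hj
      have hDpos : 0 < |D| := abs_pos.mpr hDne
      set ε : ℝ := min (|wh j|/2) (|D|/(K+1)) with hε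
      have hεpos : 0 < ε := lt_min (by linarith) (by positivity)
      have hεlt : |ε| < |wh j| := by
        rw [abs_of_pos hεpos]
        calc ε ≤ |wh j|/2 := min_le_left _ _
        _ < |wh j| := by linarith
      have hεlt' : |(-ε)| < |wh j| := by rwa [abs_neg]
      have h1 := hDbound ε hεlt
      have h2 := hDbound (-ε) hεlt'
      have hεle : ε ≤ |D|/(K+1) := min_le_right _ _
      have habsD : ε * |D| ≤ ε^2 * K / 2 := by
        rcases abs_cases D with ⟨h, _⟩ | ⟨h, _⟩ <;> rw [h] <;> linarith
      have hεD : ε * (K+1) ≤ |D| := by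
        rw [le_div_iff₀ (by positivity)] at hεle
        linarith [hεle]
      have hh := mul_le_mul_of_nonneg_left hεD hεpos.le
      have hKK : 0 ≤ ε * ε * K := mul_nonneg (mul_pos hεpos hεpos).le hK0
      linarith [mul_pos hεpos hεpos, hh, habsD, hKK]
    have hcs : c = lam * s := by linarith [hD ▸ hDzero]
    constructor
    · rw [hcs, abs_mul, hs1, abs_of_pos hlam, mul_one]
    · rw [hcs, mul_assoc, hswh]
  -- complementary slackness
  have cs : ∀ j : Fin p, ⟪u, b j⟫ * wh j = lam * |wh j| := by
    intro j
    by_cases hj : wh j = 0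
    · simp [hj]
    · exact (kkt j hj).2
  have hinnerS : ⟪u, S⟫ = lam * ∑ k, |wh k| := by
    rw [hS, inner_sum, Finset.mul_sum]
    refine Finset.sum_congr rfl fun k _ => ?_
    rw [real_inner_smul_right]
    linarith [cs k]
  -- strong duality value
  have hval : f wh = ⟪u, y⟫ - 1/2 * ‖u‖^2 := by
    rw [hf wh]
    have h1 : y - ∑ k, wh k • b k = u := rfl
    rw [h1]
    have h3 : ⟪u, S⟫ = ⟪u, y⟫ - ‖u‖^2 := by
      have hSy : S = y - u := by rw [hu]; abel
      rw [hSy, inner_sub_right, real_inner_self_eq_norm_sq]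
    linarith [hinnerS]
  -- weak duality
  have hweak : lam * ⟪θf, y⟫ - lam^2/2 * ‖θf‖^2 ≤ f wh := by
    rw [hf wh]
    have h1' : y - ∑ k, wh k • b k = u := rfl
    rw [h1']
    have h1 : 0 ≤ 1/2 * ‖u - lam • θf‖^2 := by positivity
    rw [norm_sub_sq_real, real_inner_smul_right, norm_smul, mul_pow, Real.norm_eq_abs,
      sq_abs] at h1
    have h2 : ⟪u, θf⟫ = ⟪θf, y⟫ - ⟪θf, S⟫ := by
      rw [real_inner_comm, hu, inner_sub_right]
    rw [h2] at h1
    have h3 : ⟪θf, S⟫ ≤ ∑ k, |wh k| := by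
      rw [hS, inner_sum]
      refine Finset.sum_le_sum fun k _ => ?_
      rw [real_inner_smul_right]
      calc wh k * ⟪θf, b k⟫ ≤ |wh k * ⟪θf, b k⟫| := le_abs_self _
        _ = |wh k| * |⟪θf, b k⟫| := abs_mul _ _
        _ ≤ |wh k| * 1 := mul_le_mul_of_nonneg_left (hθf k) (abs_nonneg _)
        _ = |wh k| := mul_one _
    have h4 : lam * ⟪θf, S⟫ ≤ lam * ∑ k, |wh k| := mul_le_mul_of_nonneg_left h3 hlam.le
    nlinarith [h1, h4]
  -- radius bound
  have hcomb : lam * ⟪θf, y⟫ - lam^2/2 * ‖θf‖^2 ≤ ⟪u, y⟫ - 1/2 * ‖u‖^2 := hval ▸ hweak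
  clear_value S u
  clear hf hopt key cs hinnerS hval hweak f hS hu
  have hrad : ‖lam⁻¹ • y - lam⁻¹ • u‖ ≤ r := by
    have hq : lam⁻¹ • y - lam⁻¹ • u = lam⁻¹ • (y - u) := (smul_sub _ _ _).symm
    have hq2 : lam⁻¹ • y - θf = lam⁻¹ • (y - lam • θf) := by
      rw [smul_sub, smul_smul, inv_mul_cancel₀ hlam.ne', one_smul]
    have hnorm : ‖y - u‖ ≤ ‖y - lam • θf‖ := by
      have hsq : ‖y - u‖^2 ≤ ‖y - lam • θf‖^2 := by
        rw [norm_sub_sq_real, norm_sub_sq_real, real_inner_smul_right, norm_smul, mul_pow,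
          Real.norm_eq_abs, sq_abs]
        have hcomm : ⟪u, y⟫ = ⟪y, u⟫ := real_inner_comm _ _
        have hcomm2 : ⟪θf, y⟫ = ⟪y, θf⟫ := real_inner_comm _ _
        nlinarith [hcomb]
      have := Real.sqrt_le_sqrt hsq
      rwa [Real.sqrt_sq (norm_nonneg _), Real.sqrt_sq (norm_nonneg _)] at this
    rw [hr, hq, hq2, norm_smul, norm_smul]
    exact mul_le_mul_of_nonneg_left hnorm (norm_nonneg _)
  -- final contradiction
  by_contra hwi
  obtain ⟨habs1, _⟩ := kkt i hwi
  have hθi : |⟪lam⁻¹ • u, b i⟫| = 1 := by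
    rw [real_inner_smul_left, abs_mul, abs_of_pos (inv_pos.mpr hlam), habs1,
      inv_mul_cancel₀ hlam.ne']
  have hdiff : |⟪lam⁻¹ • u, b i⟫ - ⟪lam⁻¹ • y, b i⟫| ≤ r * ‖b i‖ := by
    rw [← inner_sub_left]
    calc |⟪lam⁻¹ • u - lam⁻¹ • y, b i⟫| ≤ ‖lam⁻¹ • u - lam⁻¹ • y‖ * ‖b i‖ :=
        abs_real_inner_le_norm _ _
      _ ≤ r * ‖b i‖ := by
          refine mul_le_mul_of_nonneg_right ?_ (norm_nonneg _)
          rw [norm_sub_rev]; exact hrad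
  have h5 := abs_sub_abs_le_abs_sub (⟪lam⁻¹ • u, b i⟫) (⟪lam⁻¹ • y, b i⟫)
  rw [hθi] at h5
  linarith [htest, hdiff, h5]
end

section
/- Consider the iterative refinement: given a ball S(q_k, r_k) containing a point θ* and a unit vector n_k with c_k such that n_k^T θ* ≤ c_k and ψ_k = (q_k^T n_k − c_k)/r_k ∈ (0, 1], define q_{k+1} = q_k − ψ_k r_k n_k and r_{k+1} = r_k √(1 − ψ_k²). Then θ* ∈ S(q_{k+1}, r_{k+1}) and r_{k+1} < r_k. -/
theorem stmt18 (n : ℕ) (qk θs nk : EuclideanSpace ℝ (Fin n)) (rk ck : ℝ)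
    (hrk : 0 < rk) (hnk : ‖nk‖ = 1)
    (hball : θs ∈ Metric.closedBall qk rk)
    (hhalf : (inner ℝ nk θs : ℝ) ≤ ck)
    (ψ : ℝ) (hψ : ψ = ((inner ℝ qk nk : ℝ) - ck) / rk) (hψ0 : 0 < ψ) (hψ1 : ψ ≤ 1) :
    θs ∈ Metric.closedBall (qk - (ψ * rk) • nk) (rk * Real.sqrt (1 - ψ ^ 2)) ∧
    rk * Real.sqrt (1 - ψ ^ 2) < rk := by
  have hψrk : ψ * rk = (inner ℝ qk nk : ℝ) - ck := by
    rw [hψ]; field_simp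
  have h1ψ2 : 0 ≤ 1 - ψ ^ 2 := by nlinarith
  have hd : ‖θs - qk‖ ≤ rk := by
    simpa [Metric.mem_closedBall, dist_eq_norm] using hball
  have hin : (inner ℝ (θs - qk) nk : ℝ) ≤ -(ψ * rk) := by
    rw [inner_sub_left, hψrk]
    have : (inner ℝ θs nk : ℝ) ≤ ck := by rwa [real_inner_comm] at hhalf
    linarith [this]
  have key : ‖θs - (qk - (ψ * rk) • nk)‖ ^ 2 ≤ (rk * Real.sqrt (1 - ψ ^ 2)) ^ 2 := by
    have heq : θs - (qk - (ψ * rk) • nk) = (θs - qk) + (ψ * rk) • nk := by abel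
    rw [heq, norm_add_sq_real, inner_smul_right, norm_smul]
    have hψrk0 : 0 < ψ * rk := mul_pos hψ0 hrk
    have hns : ‖(ψ * rk : ℝ)‖ = ψ * rk := abs_of_pos hψrk0
    rw [hns, hnk, mul_pow rk, Real.sq_sqrt h1ψ2]
    have hd2 : ‖θs - qk‖ ^ 2 ≤ rk ^ 2 := by
      have := norm_nonneg (θs - qk); nlinarith
    nlinarith [mul_le_mul_of_nonneg_left hin (le_of_lt hψrk0)]
  have hRnn : 0 ≤ rk * Real.sqrt (1 - ψ ^ 2) :=
    mul_nonneg hrk.le (Real.sqrt_nonneg _)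
  constructor
  · rw [Metric.mem_closedBall, dist_eq_norm]
    nlinarith [norm_nonneg (θs - (qk - (ψ * rk) • nk))]
  · have : Real.sqrt (1 - ψ ^ 2) < 1 := by
      have h := Real.sqrt_lt_sqrt h1ψ2 (show 1 - ψ ^ 2 < 1 by nlinarith)
      simpa using h
    nlinarith
end
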